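/- arXiv:2105.13339 — 2 statements merged into one kernel-verified Lean document; each statement's English description precedes it below -/
import Mathlib

section
/- For every Z ∈ m, J ∘ S_{JZ} ∘ S_Z = S_{JZ} ∘ S_Z ∘ J as ℂ-linear maps from m to m. -/
noncomputable section

variable {L : Type*} [NormedAddCommGroup L] [NormedSpace ℂ L] [FiniteDimensional ℂ L]

/-- The adjoint operator ad_Z = ⁅Z, ·⁆, as a continuous ℂ-linear endomorphism of L, where the
Lie bracket of L is given by the ℂ-bilinear map bra. -/
def adC (bra : L →ₗ[ℂ] L →ₗ[ℂ] L) (Z : L) : L →L[ℂ] L :=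
  LinearMap.toContinuousLinearMap (bra Z)

/-- exp T = Σ_{n ≥ 0} Tⁿ/n!, the exponential in the Banach algebra of continuous ℂ-linear
endomorphisms of L. -/
def expOp (T : L →L[ℂ] L) : L →L[ℂ] L :=
  ∑' n : ℕ, ((n.factorial : ℂ)⁻¹) • T ^ n

/-- E_Z = Σ_{n ≥ 0} ad_Z^{2n}/(2n+1)!. -/
def Eop (bra : L →ₗ[ℂ] L →ₗ[ℂ] L) (Z : L) : L →L[ℂ] L :=
  ∑' n : ℕ, (((2 * n + 1).factorial : ℂ)⁻¹) • adC bra Z ^ (2 * n)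

/-- F_Z = Σ_{n ≥ 1} ad_Z^{2n-1}/(2n)!. -/
def Fop (bra : L →ₗ[ℂ] L →ₗ[ℂ] L) (Z : L) : L →L[ℂ] L :=
  ∑' n : ℕ, (((2 * n + 2).factorial : ℂ)⁻¹) • adC bra Z ^ (2 * n + 1)

/-- S_Z = Σ_{n ≥ 0} ad_Z^{2n}/(2n)!. -/
def Sop (bra : L →ₗ[ℂ] L →ₗ[ℂ] L) (Z : L) : L →L[ℂ] L :=
  ∑' n : ℕ, (((2 * n).factorial : ℂ)⁻¹) • adC bra Z ^ (2 * n)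

set_option linter.unusedSectionVars false
set_option maxHeartbeats 1000000

lemma bra_skew (bra : L →ₗ[ℂ] L →ₗ[ℂ] L) (halt : ∀ x : L, bra x x = 0) (x y : L) :
    bra x y = - bra y x := by
  have h := halt (x + y)
  simp only [map_add, LinearMap.add_apply, halt x, halt y, zero_add, add_zero] at h
  exact eq_neg_of_add_eq_zero_right h

lemma core_H (bra : L →ₗ[ℂ] L →ₗ[ℂ] L)
    (halt : ∀ x : L, bra x x = 0)
    (hjac : ∀ x y z : L, bra x (bra y z) = bra (bra x y) z + bra y (bra x z))
    (k mp mn : Submodule ℂ L)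
    (hkp : ∀ x ∈ k, ∀ y ∈ mp, bra x y ∈ mp)
    (hpp : ∀ x ∈ mp, ∀ y ∈ mp, bra x y = 0)
    (hnn : ∀ x ∈ mn, ∀ y ∈ mn, bra x y = 0)
    (hpn : ∀ x ∈ mp, ∀ y ∈ mn, bra x y ∈ k)
    {a y z : L} (ha : a ∈ mp) (hy : y ∈ mn) (hz : z ∈ mn) :
    bra a (bra (bra a y) (bra a z)) = 0 := by
  set s' := bra a y with hs'def
  set s := bra a z with hsdef
  have hs' : s' ∈ k := hpn a ha y hy
  have hs : s ∈ k := hpn a ha z hz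
  have ht : bra a s ∈ mp := by
    rw [bra_skew bra halt]; exact neg_mem (hkp s hs a ha)
  have ht' : bra a s' ∈ mp := by
    rw [bra_skew bra halt]; exact neg_mem (hkp s' hs' a ha)
  set t := bra a s with htdef
  set t' := bra a s' with ht'def
  -- e1 : H = bra t' s + bra s' t
  have e1 : bra a (bra s' s) = bra t' s + bra s' t := hjac a s' s
  -- e3 : bra y s = - bra s' z
  have e3 : bra y s = - bra s' z := by
    have h := hjac y a z
    rw [hnn y hy z hz, map_zero, add_zero, bra_skew bra halt y a, map_neg,
      LinearMap.neg_apply] at h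
    exact h
  -- e2 : bra s' s = bra a (bra y s) - bra y t
  have e2 : bra s' s = bra a (bra y s) - bra y t := by
    have h := hjac a y s
    rw [h]; abel
  -- e4 : bra a (bra s' z) = bra t' z + bra s' s
  have e4 : bra a (bra s' z) = bra t' z + bra s' s := hjac a s' z
  -- e5 : bra a (bra t' z) = bra t' s
  have e5 : bra a (bra t' z) = bra t' s := by
    have h := hjac a t' z
    rw [hpp a ha t' ht', map_zero, LinearMap.zero_apply, zero_add] at h
    exact h
  -- e6 : bra a (bra y t) = bra s' t
  have e6 : bra a (bra y t) = bra s' t := by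
    have h := hjac a y t
    rw [hpp a ha t ht, map_zero, add_zero] at h
    exact h
  have e2'' : bra s' s = -(bra t' z + bra s' s) - bra y t := by
    have h := e2
    rw [e3, map_neg, e4] at h
    exact h
  have e7 : bra a (bra s' s) = -(bra a (bra t' z) + bra a (bra s' s)) - bra a (bra y t) := by
    conv_lhs => rw [e2'']
    simp only [map_sub, map_neg, map_add]
  rw [e5, e6] at e7
  have h3 : (3 : ℂ) • bra a (bra s' s) = 0 := by
    linear_combination (norm := module) e7 + e1
  have := smul_eq_zero.mp h3
  rcases this with h | h
  · exact absurd h (by norm_num)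
  · exact h

lemma p3 (bra : L →ₗ[ℂ] L →ₗ[ℂ] L)
    (halt : ∀ x : L, bra x x = 0)
    (k mp mn : Submodule ℂ L)
    (hsup : k ⊔ (mp ⊔ mn) = ⊤)
    (hkp : ∀ x ∈ k, ∀ y ∈ mp, bra x y ∈ mp)
    (hpp : ∀ x ∈ mp, ∀ y ∈ mp, bra x y = 0)
    (hpn : ∀ x ∈ mp, ∀ y ∈ mn, bra x y ∈ k)
    {a : L} (ha : a ∈ mp) (x : L) :
    bra a (bra a (bra a x)) = 0 := by
  have hkmem : ∀ u ∈ k, bra a u ∈ mp := fun u hu => by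
    rw [bra_skew bra halt]; exact neg_mem (hkp u hu a ha)
  have hx : x ∈ k ⊔ (mp ⊔ mn) := by rw [hsup]; exact Submodule.mem_top
  obtain ⟨u, hu, v, hv, rfl⟩ := Submodule.mem_sup.mp hx
  obtain ⟨w, hw, r, hr, rfl⟩ := Submodule.mem_sup.mp hv
  have h1 : bra a (bra a (bra a u)) = 0 := by
    rw [hpp a ha _ (hkmem u hu), map_zero]
  have h2 : bra a w = 0 := hpp a ha w hw
  have h3 : bra a (bra a (bra a r)) = 0 :=
    hpp a ha _ (hkmem _ (hpn a ha r hr))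
  simp only [map_add, h1, h2, h3, map_zero, add_zero, zero_add]

lemma prp (bra : L →ₗ[ℂ] L →ₗ[ℂ] L)
    (halt : ∀ x : L, bra x x = 0)
    (hjac : ∀ x y z : L, bra x (bra y z) = bra (bra x y) z + bra y (bra x z))
    (k mp mn : Submodule ℂ L)
    (hsup : k ⊔ (mp ⊔ mn) = ⊤)
    (hkp : ∀ x ∈ k, ∀ y ∈ mp, bra x y ∈ mp)
    (hpp : ∀ x ∈ mp, ∀ y ∈ mp, bra x y = 0)
    (hnn : ∀ x ∈ mn, ∀ y ∈ mn, bra x y = 0)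
    (hpn : ∀ x ∈ mp, ∀ y ∈ mn, bra x y ∈ k)
    {a b : L} (ha : a ∈ mp) (hb : b ∈ mn) (x : L) :
    bra a (bra (bra a b) (bra a x)) = 0 := by
  have hkmem : ∀ u ∈ k, bra a u ∈ mp := fun u hu => by
    rw [bra_skew bra halt]; exact neg_mem (hkp u hu a ha)
  have hK : bra a b ∈ k := hpn a ha b hb
  have hx : x ∈ k ⊔ (mp ⊔ mn) := by rw [hsup]; exact Submodule.mem_top
  obtain ⟨u, hu, v, hv, rfl⟩ := Submodule.mem_sup.mp hx
  obtain ⟨w, hw, r, hr, rfl⟩ := Submodule.mem_sup.mp hv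
  have h1 : bra a (bra (bra a b) (bra a u)) = 0 :=
    hpp a ha _ (hkp _ hK _ (hkmem u hu))
  have h2 : bra a w = 0 := hpp a ha w hw
  have h3 : bra a (bra (bra a b) (bra a r)) = 0 :=
    core_H bra halt hjac k mp mn hkp hpp hnn hpn ha hb hr
  simp only [map_add, h1, h2, h3, map_zero, add_zero, zero_add]

lemma comm_pointwise (bra : L →ₗ[ℂ] L →ₗ[ℂ] L)
    (halt : ∀ x : L, bra x x = 0)
    (hjac : ∀ x y z : L, bra x (bra y z) = bra (bra x y) z + bra y (bra x z))
    (k mp mn : Submodule ℂ L)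
    (hsup : k ⊔ (mp ⊔ mn) = ⊤)
    (hkp : ∀ x ∈ k, ∀ y ∈ mp, bra x y ∈ mp)
    (hkn : ∀ x ∈ k, ∀ y ∈ mn, bra x y ∈ mn)
    (hpp : ∀ x ∈ mp, ∀ y ∈ mp, bra x y = 0)
    (hnn : ∀ x ∈ mn, ∀ y ∈ mn, bra x y = 0)
    (hpn : ∀ x ∈ mp, ∀ y ∈ mn, bra x y ∈ k)
    {Zp Zn : L} (hZp : Zp ∈ mp) (hZn : Zn ∈ mn) (x : L) :
    bra (Zp + Zn) (bra (Zp + Zn) (bra (Complex.I • Zp - Complex.I • Zn)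
        (bra (Complex.I • Zp - Complex.I • Zn) x)))
      = bra (Complex.I • Zp - Complex.I • Zn) (bra (Complex.I • Zp - Complex.I • Zn)
        (bra (Zp + Zn) (bra (Zp + Zn) x))) := by
  have hsup' : k ⊔ (mn ⊔ mp) = ⊤ := by rw [sup_comm mn mp]; exact hsup
  have hnp : ∀ x ∈ mn, ∀ y ∈ mp, bra x y ∈ k := fun u hu v hv => by
    rw [bra_skew bra halt]; exact neg_mem (hpn v hv u hu)
  have hp3 : ∀ y, bra Zp (bra Zp (bra Zp y)) = 0 :=
    p3 bra halt k mp mn hsup hkp hpp hpn hZp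
  have hq3 : ∀ y, bra Zn (bra Zn (bra Zn y)) = 0 :=
    p3 bra halt k mn mp hsup' hkn hnn hnp hZn
  have hprp0 : ∀ y, bra Zp (bra (bra Zp Zn) (bra Zp y)) = 0 :=
    prp bra halt hjac k mp mn hsup hkp hpp hnn hpn hZp hZn
  have hqrq0 : ∀ y, bra Zn (bra (bra Zn Zp) (bra Zn y)) = 0 :=
    prp bra halt hjac k mn mp hsup' hkn hnn hpp hnp hZn hZp
  have hprp : ∀ y, bra Zp (bra Zp (bra Zn (bra Zp y)))
      = bra Zp (bra Zn (bra Zp (bra Zp y))) := by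
    intro y
    have h := hjac Zp Zn (bra Zp y)
    have h2 := congrArg (fun w => bra Zp w) h
    simp only [map_add] at h2
    have h3 := hprp0 y
    rw [show bra (bra Zp Zn) (bra Zp y)
        = bra Zp (bra Zn (bra Zp y)) - bra Zn (bra Zp (bra Zp y)) by rw [h]; abel,
      map_sub] at h3
    linear_combination (norm := module) h3
  have hqrq : ∀ y, bra Zn (bra Zn (bra Zp (bra Zn y)))
      = bra Zn (bra Zp (bra Zn (bra Zn y))) := by
    intro y
    have h := hjac Zn Zp (bra Zn y)
    have h3 := hqrq0 y
    rw [show bra (bra Zn Zp) (bra Zn y)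
        = bra Zn (bra Zp (bra Zn y)) - bra Zp (bra Zn (bra Zn y)) by rw [h]; abel,
      map_sub] at h3
    linear_combination (norm := module) h3
  simp only [map_add, map_sub, map_smul, LinearMap.add_apply, LinearMap.sub_apply,
    LinearMap.smul_apply, smul_add, smul_sub, smul_smul, hp3, hq3, map_zero, smul_zero,
    hprp, hqrq]
  module

lemma memC (bra : L →ₗ[ℂ] L →ₗ[ℂ] L)
    (halt : ∀ x : L, bra x x = 0)
    (k mp mn : Submodule ℂ L)
    (hkp : ∀ x ∈ k, ∀ y ∈ mp, bra x y ∈ mp)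
    (hkn : ∀ x ∈ k, ∀ y ∈ mn, bra x y ∈ mn)
    (hpp : ∀ x ∈ mp, ∀ y ∈ mp, bra x y = 0)
    (hnn : ∀ x ∈ mn, ∀ y ∈ mn, bra x y = 0)
    (hpn : ∀ x ∈ mp, ∀ y ∈ mn, bra x y ∈ k)
    {Zp Zn : L} (hZp : Zp ∈ mp) (hZn : Zn ∈ mn)
    {W : L} (hW : W ∈ mp ⊔ mn) :
    bra (Zp + Zn) (bra (Zp + Zn) W) ∈ mp ⊔ mn := by
  obtain ⟨wp, hwp, wn, hwn, rfl⟩ := Submodule.mem_sup.mp hW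
  have hpk : ∀ u ∈ k, bra Zp u ∈ mp := fun u hu => by
    rw [bra_skew bra halt]; exact neg_mem (hkp u hu Zp hZp)
  have hnk : ∀ u ∈ k, bra Zn u ∈ mn := fun u hu => by
    rw [bra_skew bra halt]; exact neg_mem (hkn u hu Zn hZn)
  have hk1 : bra Zn wp ∈ k := by
    rw [bra_skew bra halt]; exact neg_mem (hpn wp hwp Zn hZn)
  have hk2 : bra Zp wn ∈ k := hpn Zp hZp wn hwn
  simp only [map_add, LinearMap.add_apply, hpp Zp hZp wp hwp, hnn Zn hZn wn hwn,
    map_zero, zero_add, add_zero]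
  -- remaining: sum of four atoms
  refine add_mem (add_mem ?_ ?_) (add_mem ?_ ?_) <;>
    first
      | exact Submodule.mem_sup_left (hpk _ hk1)
      | exact Submodule.mem_sup_right (hnk _ hk1)
      | exact Submodule.mem_sup_left (hpk _ hk2)
      | exact Submodule.mem_sup_right (hnk _ hk2)

lemma swapC (bra : L →ₗ[ℂ] L →ₗ[ℂ] L)
    (halt : ∀ x : L, bra x x = 0)
    (k mp mn : Submodule ℂ L)
    (hkp : ∀ x ∈ k, ∀ y ∈ mp, bra x y ∈ mp)
    (hkn : ∀ x ∈ k, ∀ y ∈ mn, bra x y ∈ mn)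
    (hpp : ∀ x ∈ mp, ∀ y ∈ mp, bra x y = 0)
    (hnn : ∀ x ∈ mn, ∀ y ∈ mn, bra x y = 0)
    (hpn : ∀ x ∈ mp, ∀ y ∈ mn, bra x y ∈ k)
    (J : L →ₗ[ℂ] L)
    (hJp : ∀ x ∈ mp, J x = Complex.I • x)
    (hJn : ∀ x ∈ mn, J x = -(Complex.I • x))
    {Zp Zn : L} (hZp : Zp ∈ mp) (hZn : Zn ∈ mn)
    {W : L} (hW : W ∈ mp ⊔ mn) :
    J (bra (Zp + Zn) (bra (Zp + Zn) W))
      = bra (Complex.I • Zp - Complex.I • Zn) (bra (Complex.I • Zp - Complex.I • Zn) (J W)) := by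
  obtain ⟨wp, hwp, wn, hwn, rfl⟩ := Submodule.mem_sup.mp hW
  have hpk : ∀ u ∈ k, bra Zp u ∈ mp := fun u hu => by
    rw [bra_skew bra halt]; exact neg_mem (hkp u hu Zp hZp)
  have hnk : ∀ u ∈ k, bra Zn u ∈ mn := fun u hu => by
    rw [bra_skew bra halt]; exact neg_mem (hkn u hu Zn hZn)
  have hk1 : bra Zn wp ∈ k := by
    rw [bra_skew bra halt]; exact neg_mem (hpn wp hwp Zn hZn)
  have hk2 : bra Zp wn ∈ k := hpn Zp hZp wn hwn
  have j1 : J (bra Zp (bra Zn wp)) = Complex.I • bra Zp (bra Zn wp) := hJp _ (hpk _ hk1)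
  have j2 : J (bra Zn (bra Zn wp)) = -(Complex.I • bra Zn (bra Zn wp)) := hJn _ (hnk _ hk1)
  have j3 : J (bra Zp (bra Zp wn)) = Complex.I • bra Zp (bra Zp wn) := hJp _ (hpk _ hk2)
  have j4 : J (bra Zn (bra Zp wn)) = -(Complex.I • bra Zn (bra Zp wn)) := hJn _ (hnk _ hk2)
  have jw : J (wp + wn) = Complex.I • wp - Complex.I • wn := by
    rw [map_add, hJp wp hwp, hJn wn hwn, sub_eq_add_neg]
  rw [jw]
  simp only [map_add, map_sub, map_smul, LinearMap.add_apply, LinearMap.sub_apply,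
    LinearMap.smul_apply, hpp Zp hZp wp hwp, hnn Zn hZn wn hwn, map_zero, smul_zero,
    zero_add, add_zero, sub_zero, zero_sub, smul_add, smul_sub, smul_smul, smul_neg, map_neg,
    j1, j2, j3, j4, Complex.I_mul_I, neg_smul, one_smul, neg_neg]
  module

lemma opnorm_pow_le (T : L →L[ℂ] L) : ∀ n : ℕ, ‖T ^ n‖ ≤ ‖T‖ ^ n
  | 0 => by
      rw [pow_zero, pow_zero, ContinuousLinearMap.one_def]
      exact ContinuousLinearMap.norm_id_le
  | (n + 1) => by
      rw [pow_succ, pow_succ]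
      exact (norm_mul_le _ _).trans
        (mul_le_mul_of_nonneg_right (opnorm_pow_le T n) (norm_nonneg T))

lemma sop_summable (bra : L →ₗ[ℂ] L →ₗ[ℂ] L) (Z : L) :
    Summable (fun n : ℕ => (((2 * n).factorial : ℂ)⁻¹) • adC bra Z ^ (2 * n)) := by
  apply Summable.of_norm
  apply Summable.of_nonneg_of_le (fun n => norm_nonneg _) ?_
    (Real.summable_pow_div_factorial (‖adC bra Z‖ ^ 2))
  intro n
  rw [norm_smul (((2 * n).factorial : ℂ))⁻¹ (adC bra Z ^ (2 * n))]
  have h1 : ‖(((2 * n).factorial : ℂ))⁻¹‖ = (((2 * n).factorial : ℝ))⁻¹ := by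
    rw [norm_inv, Complex.norm_natCast]
  have h2 : ‖adC bra Z ^ (2 * n)‖ ≤ (‖adC bra Z‖ ^ 2) ^ n := by
    rw [← pow_mul]; exact opnorm_pow_le _ _
  have h3 : (((2 * n).factorial : ℝ))⁻¹ ≤ ((n.factorial : ℝ))⁻¹ := by
    apply inv_anti₀
    · positivity
    · exact_mod_cast Nat.factorial_le (by omega)
  rw [h1, div_eq_inv_mul]
  exact mul_le_mul h3 h2 (norm_nonneg _) (by positivity)

lemma sop_apply (bra : L →ₗ[ℂ] L →ₗ[ℂ] L) (Z : L) (v : L) :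
    Sop bra Z v = ∑' n : ℕ, (((2 * n).factorial : ℂ)⁻¹) • (adC bra Z ^ (2 * n)) v := by
  have h := (ContinuousLinearMap.apply ℂ L v).map_tsum (sop_summable bra Z)
  simpa only [Sop, ContinuousLinearMap.apply_apply, ContinuousLinearMap.smul_apply] using h

lemma sop_summable_apply (bra : L →ₗ[ℂ] L →ₗ[ℂ] L) (Z : L) (v : L) :
    Summable (fun n : ℕ => (((2 * n).factorial : ℂ)⁻¹) • (adC bra Z ^ (2 * n)) v) := by
  have h := ((sop_summable bra Z).hasSum.mapL (ContinuousLinearMap.apply ℂ L v)).summable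
  simpa only [ContinuousLinearMap.apply_apply, ContinuousLinearMap.smul_apply,
    Function.comp] using h

lemma tsum_mem_closed {f : ℕ → L} (hf : Summable f) (p : Submodule ℂ L)
    (h : ∀ n, f n ∈ p) : (∑' n, f n) ∈ p := by
  have hc : IsClosed (p : Set L) := Submodule.closed_of_finiteDimensional p
  exact hc.mem_of_tendsto hf.hasSum
    (Filter.Eventually.of_forall fun s => sum_mem fun n _ => h n)

lemma tsum_commute {f g : ℕ → (L →L[ℂ] L)} (hf : Summable f) (hg : Summable g)
    (h : ∀ n m, f n * g m = g m * f n) :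
    (∑' n, f n) * (∑' m, g m) = (∑' m, g m) * (∑' n, f n) := by
  have step : ∀ n, f n * (∑' m, g m) = (∑' m, g m) * f n := by
    intro n
    calc f n * (∑' m, g m) = ∑' m, f n * g m := (hg.hasSum.mul_left (f n)).tsum_eq.symm
      _ = ∑' m, g m * f n := tsum_congr fun m => h n m
      _ = (∑' m, g m) * f n := (hg.hasSum.mul_right (f n)).tsum_eq
  calc (∑' n, f n) * (∑' m, g m) = ∑' n, f n * (∑' m, g m) :=
        (hf.hasSum.mul_right _).tsum_eq.symm
    _ = ∑' n, (∑' m, g m) * f n := tsum_congr step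
    _ = (∑' m, g m) * (∑' n, f n) := (hf.hasSum.mul_left _).tsum_eq

/-- For every Z ∈ m, J ∘ S_{JZ} ∘ S_Z = S_{JZ} ∘ S_Z ∘ J as ℂ-linear maps from m to m. -/
theorem statement6 {L : Type*} [NormedAddCommGroup L] [NormedSpace ℂ L] [FiniteDimensional ℂ L]
    (bra : L →ₗ[ℂ] L →ₗ[ℂ] L)
    (halt : ∀ x : L, bra x x = 0)
    (hjac : ∀ x y z : L, bra x (bra y z) = bra (bra x y) z + bra y (bra x z))
    (k mp mn : Submodule ℂ L)
    (hsup : k ⊔ (mp ⊔ mn) = ⊤)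
    (hd1 : Disjoint k (mp ⊔ mn))
    (hd2 : Disjoint mp mn)
    (hkk : ∀ x ∈ k, ∀ y ∈ k, bra x y ∈ k)
    (hkp : ∀ x ∈ k, ∀ y ∈ mp, bra x y ∈ mp)
    (hkn : ∀ x ∈ k, ∀ y ∈ mn, bra x y ∈ mn)
    (hpp : ∀ x ∈ mp, ∀ y ∈ mp, bra x y = 0)
    (hnn : ∀ x ∈ mn, ∀ y ∈ mn, bra x y = 0)
    (hpn : ∀ x ∈ mp, ∀ y ∈ mn, bra x y ∈ k)
    (J : L →ₗ[ℂ] L)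
    (hJp : ∀ x ∈ mp, J x = Complex.I • x)
    (hJn : ∀ x ∈ mn, J x = -(Complex.I • x))
    (Z : L) (hZ : Z ∈ mp ⊔ mn) :
    ∀ W ∈ mp ⊔ mn,
      J (Sop bra (J Z) (Sop bra Z W)) = Sop bra (J Z) (Sop bra Z (J W)) := by
  intro W hW
  obtain ⟨Zp, hZp, Zn, hZn, rfl⟩ := Submodule.mem_sup.mp hZ
  have hJZ : J (Zp + Zn) = Complex.I • Zp - Complex.I • Zn := by
    rw [map_add, hJp Zp hZp, hJn Zn hZn, sub_eq_add_neg]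
  have hZp' : Complex.I • Zp ∈ mp := Submodule.smul_mem _ _ hZp
  have hZn' : -(Complex.I • Zn) ∈ mn := neg_mem (Submodule.smul_mem _ _ hZn)
  have hsum' : Complex.I • Zp + -(Complex.I • Zn) = Complex.I • Zp - Complex.I • Zn :=
    (sub_eq_add_neg _ _).symm
  set A : L →L[ℂ] L := adC bra (Zp + Zn) with hA
  set B : L →L[ℂ] L := adC bra (J (Zp + Zn)) with hB
  have hadC : ∀ (v x : L), adC bra v x = bra v x := fun v x => rfl
  have hsq : ∀ (T : L →L[ℂ] L) (x : L), (T ^ 2) x = T (T x) := by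
    intro T x; rw [pow_two, ContinuousLinearMap.mul_apply]
  have hpow : ∀ (T : L →L[ℂ] L) (n : ℕ) (x : L),
      (T ^ (2 * (n + 1))) x = (T ^ (2 * n)) (T (T x)) := by
    intro T n x
    rw [show 2 * (n + 1) = 2 * n + 2 by ring, pow_add, ContinuousLinearMap.mul_apply, hsq]
  -- single step facts
  have memCs : ∀ x ∈ mp ⊔ mn, bra (Zp + Zn) (bra (Zp + Zn) x) ∈ mp ⊔ mn := fun x hx =>
    memC bra halt k mp mn hkp hkn hpp hnn hpn hZp hZn hx
  have memDs : ∀ x ∈ mp ⊔ mn,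
      bra (J (Zp + Zn)) (bra (J (Zp + Zn)) x) ∈ mp ⊔ mn := by
    intro x hx
    have h := memC bra halt k mp mn hkp hkn hpp hnn hpn hZp' hZn' hx
    rw [hsum'] at h
    rw [hJZ]
    exact h
  have swapCs : ∀ x ∈ mp ⊔ mn,
      J (bra (Zp + Zn) (bra (Zp + Zn) x))
        = bra (J (Zp + Zn)) (bra (J (Zp + Zn)) (J x)) := by
    intro x hx
    rw [hJZ]
    exact swapC bra halt k mp mn hkp hkn hpp hnn hpn J hJp hJn hZp hZn hx
  have swapDs : ∀ x ∈ mp ⊔ mn,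
      J (bra (J (Zp + Zn)) (bra (J (Zp + Zn)) x))
        = bra (Zp + Zn) (bra (Zp + Zn) (J x)) := by
    intro x hx
    have h := swapC bra halt k mp mn hkp hkn hpp hnn hpn J hJp hJn hZp' hZn' hx
    rw [hsum'] at h
    have hneg : Complex.I • (Complex.I • Zp) - Complex.I • (-(Complex.I • Zn))
        = -(Zp + Zn) := by
      rw [smul_smul, smul_neg, smul_smul, Complex.I_mul_I]
      module
    rw [hneg] at h
    rw [hJZ, h]
    simp only [map_neg, LinearMap.neg_apply, neg_neg]
  -- operator commutation
  have hC2D2 : A ^ 2 * B ^ 2 = B ^ 2 * A ^ 2 := by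
    ext x
    simp only [ContinuousLinearMap.mul_apply, hsq, hA, hB, hadC, hJZ]
    exact comm_pointwise bra halt hjac k mp mn hsup hkp hkn hpp hnn hpn hZp hZn x
  -- iterates
  have memA : ∀ (n : ℕ), ∀ x ∈ mp ⊔ mn, (A ^ (2 * n)) x ∈ mp ⊔ mn := by
    intro n
    induction n with
    | zero => intro x hx; simpa using hx
    | succ n ih =>
      intro x hx
      rw [hpow]
      exact ih _ (by rw [hA, hadC, hadC]; exact memCs x hx)
  have memB : ∀ (n : ℕ), ∀ x ∈ mp ⊔ mn, (B ^ (2 * n)) x ∈ mp ⊔ mn := by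
    intro n
    induction n with
    | zero => intro x hx; simpa using hx
    | succ n ih =>
      intro x hx
      rw [hpow]
      exact ih _ (by rw [hB, hadC, hadC]; exact memDs x hx)
  have swapAn : ∀ (n : ℕ), ∀ x ∈ mp ⊔ mn, J ((A ^ (2 * n)) x) = (B ^ (2 * n)) (J x) := by
    intro n
    induction n with
    | zero => intro x hx; simp
    | succ n ih =>
      intro x hx
      rw [hpow, hpow]
      rw [hA, hadC, hadC, ih _ (memCs x hx), swapCs x hx, hB, hadC, hadC]
  have swapBn : ∀ (n : ℕ), ∀ x ∈ mp ⊔ mn, J ((B ^ (2 * n)) x) = (A ^ (2 * n)) (J x) := by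
    intro n
    induction n with
    | zero => intro x hx; simp
    | succ n ih =>
      intro x hx
      rw [hpow, hpow]
      rw [hB, hadC, hadC, ih _ (memDs x hx), swapDs x hx, hA, hadC, hadC]
  -- Sop facts
  have hSA : ∀ v : L, Sop bra (Zp + Zn) v
      = ∑' n : ℕ, (((2 * n).factorial : ℂ)⁻¹) • (A ^ (2 * n)) v := fun v =>
    sop_apply bra (Zp + Zn) v
  have hSB : ∀ v : L, Sop bra (J (Zp + Zn)) v
      = ∑' n : ℕ, (((2 * n).factorial : ℂ)⁻¹) • (B ^ (2 * n)) v := fun v =>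
    sop_apply bra (J (Zp + Zn)) v
  have hmemS : ∀ v ∈ mp ⊔ mn, Sop bra (Zp + Zn) v ∈ mp ⊔ mn := by
    intro v hv
    rw [hSA]
    exact tsum_mem_closed (sop_summable_apply bra (Zp + Zn) v) _
      (fun n => Submodule.smul_mem _ _ (memA n v hv))
  have hJc : ∀ (f : ℕ → L) (_ : Summable f),
      J (∑' n, f n) = ∑' n, J (f n) := by
    intro f hf
    have h := (LinearMap.toContinuousLinearMap J).map_tsum hf
    simpa only [LinearMap.coe_toContinuousLinearMap'] using h
  have hJSA : ∀ v ∈ mp ⊔ mn, J (Sop bra (Zp + Zn) v) = Sop bra (J (Zp + Zn)) (J v) := by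
    intro v hv
    rw [hSA, hJc _ (sop_summable_apply bra (Zp + Zn) v), hSB]
    apply tsum_congr
    intro n
    rw [map_smul, swapAn n v hv]
  have hJSB : ∀ v ∈ mp ⊔ mn, J (Sop bra (J (Zp + Zn)) v) = Sop bra (Zp + Zn) (J v) := by
    intro v hv
    rw [hSB, hJc _ (sop_summable_apply bra (J (Zp + Zn)) v), hSA]
    apply tsum_congr
    intro n
    rw [map_smul, swapBn n v hv]
  -- commutation of the two Sop operators
  have hSS : Sop bra (Zp + Zn) * Sop bra (J (Zp + Zn))
      = Sop bra (J (Zp + Zn)) * Sop bra (Zp + Zn) := by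
    have hterm : ∀ n m : ℕ,
        ((((2 * n).factorial : ℂ)⁻¹) • A ^ (2 * n)) * ((((2 * m).factorial : ℂ)⁻¹) • B ^ (2 * m))
          = ((((2 * m).factorial : ℂ)⁻¹) • B ^ (2 * m)) * ((((2 * n).factorial : ℂ)⁻¹) • A ^ (2 * n)) := by
      intro n m
      rw [smul_mul_smul_comm, smul_mul_smul_comm]
      rw [mul_comm (((2 * n).factorial : ℂ)⁻¹) (((2 * m).factorial : ℂ)⁻¹)]
      congr 1
      rw [pow_mul, pow_mul]
      exact (Commute.pow_pow hC2D2 n m).eq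
    exact tsum_commute (sop_summable bra (Zp + Zn)) (sop_summable bra (J (Zp + Zn))) hterm
  -- final assembly
  have h1 : Sop bra (Zp + Zn) W ∈ mp ⊔ mn := hmemS W hW
  calc J (Sop bra (J (Zp + Zn)) (Sop bra (Zp + Zn) W))
      = Sop bra (Zp + Zn) (J (Sop bra (Zp + Zn) W)) := hJSB _ h1
    _ = Sop bra (Zp + Zn) (Sop bra (J (Zp + Zn)) (J W)) := by rw [hJSA W hW]
    _ = (Sop bra (Zp + Zn) * Sop bra (J (Zp + Zn))) (J W) :=
        (ContinuousLinearMap.mul_apply _ _ _).symm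
    _ = (Sop bra (J (Zp + Zn)) * Sop bra (Zp + Zn)) (J W) := by rw [hSS]
    _ = Sop bra (J (Zp + Zn)) (Sop bra (Zp + Zn) (J W)) :=
        ContinuousLinearMap.mul_apply _ _ _
end
end

section
/- Let g be a finite-dimensional complex Lie algebra with Killing form κ, endowed with a norm making it a normed ℂ-vector space, and for an endomorphism T of g let exp(T) = Σ_{n≥0} Tⁿ/n! be the exponential in the Banach algebra of continuous endomorphisms of g. Then for all Z, Υ ∈ g, κ(exp(ad_Z)(Υ), Υ) = κ(Υ, Υ) - 2·κ(Y, Y), where Y = ½(exp(ad_{Z/2}) - exp(ad_{-Z/2}))(Υ) and ad_Z denotes the operator ⁅Z,·⁆. -/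
set_option linter.unusedSectionVars false

noncomputable section

variable {L : Type*} [NormedAddCommGroup L] [NormedSpace ℂ L] [FiniteDimensional ℂ L]

/-- The Killing form κ(x, y) = trace(ad_x ∘ ad_y) of the Lie algebra L with bracket bra. -/
def killing (bra : L →ₗ[ℂ] L →ₗ[ℂ] L) (x y : L) : ℂ :=
  LinearMap.trace ℂ L (bra x ∘ₗ bra y)

section aux

variable (bra : L →ₗ[ℂ] L →ₗ[ℂ] L)

lemma expOp_eq_exp (T : L →L[ℂ] L) : expOp T = NormedSpace.exp T := by
  rw [NormedSpace.exp_eq_tsum ℂ]; rfl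

lemma adC_apply (z x : L) : adC bra z x = bra z x := rfl

lemma adC_neg (z : L) : adC bra (-z) = -(adC bra z) := by
  ext x; simp [adC]

lemma killing_symm (x y : L) : killing bra x y = killing bra y x :=
  LinearMap.trace_mul_comm ℂ (bra x) (bra y)

lemma killing_add_left (x x' y : L) :
    killing bra (x + x') y = killing bra x y + killing bra x' y := by
  simp [killing, LinearMap.add_comp]

lemma killing_smul_left (c : ℂ) (x y : L) :
    killing bra (c • x) y = c * killing bra x y := by
  simp [killing, LinearMap.smul_comp]

lemma killing_sub_left (x x' y : L) :
    killing bra (x - x') y = killing bra x y - killing bra x' y := by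
  simp [killing, LinearMap.sub_comp, map_sub]

lemma killing_sub_right (x y y' : L) :
    killing bra x (y - y') = killing bra x y - killing bra x y' := by
  simp [killing, LinearMap.comp_sub, map_sub]

lemma killing_smul_right (c : ℂ) (x y : L) :
    killing bra x (c • y) = c * killing bra x y := by
  simp [killing, LinearMap.comp_smul]

lemma killing_neg_right (x y : L) : killing bra x (-y) = -killing bra x y := by
  simp [killing, LinearMap.comp_neg]

/-- linear map x ↦ κ(x, y) -/
def kL (y : L) : L →ₗ[ℂ] ℂ where
  toFun x := killing bra x y
  map_add' x x' := killing_add_left bra x x' y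
  map_smul' c x := by
    show killing bra (c • x) y = c • killing bra x y
    rw [killing_smul_left bra c x y, smul_eq_mul]

/-- linear map y ↦ κ(x, y) -/
def kR (x : L) : L →ₗ[ℂ] ℂ where
  toFun y := killing bra x y
  map_add' y y' := by
    show killing bra x (y + y') = killing bra x y + killing bra x y'
    rw [killing_symm bra x (y + y'), killing_add_left bra y y' x,
      killing_symm bra y x, killing_symm bra y' x]
  map_smul' c y := by
    show killing bra x (c • y) = c • killing bra x y
    rw [killing_symm bra x (c • y), killing_smul_left bra c y x, killing_symm bra y x,
      smul_eq_mul]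

lemma killing_ad (hjac : ∀ x y z : L, bra x (bra y z) = bra (bra x y) z + bra y (bra x z))
    (z x y : L) : killing bra (bra z x) y = -killing bra x (bra z y) := by
  have hb : ∀ u : L, bra (bra z u) = bra z * bra u - bra u * bra z := by
    intro u
    ext w
    simp only [LinearMap.sub_apply, Module.End.mul_apply]
    rw [eq_sub_iff_add_eq]
    exact (hjac z u w).symm
  simp only [killing, ← Module.End.mul_eq_comp, hb, sub_mul, mul_sub, map_sub]
  rw [mul_assoc, mul_assoc, LinearMap.trace_mul_comm ℂ (bra z) (bra x * bra y), mul_assoc]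
  ring

lemma killing_pow_ad (hjac : ∀ x y z : L, bra x (bra y z) = bra (bra x y) z + bra y (bra x z))
    (z : L) (n : ℕ) (x y : L) :
    killing bra ((adC bra z ^ n) x) y = killing bra x (((-(adC bra z)) ^ n) y) := by
  induction n generalizing x y with
  | zero => simp
  | succ n ih =>
    rw [pow_succ, pow_succ']
    have e1 : (adC bra z ^ n * adC bra z) x = (adC bra z ^ n) (bra z x) := rfl
    have e2 : ((-(adC bra z)) * (-(adC bra z)) ^ n) y =
        -(bra z (((-(adC bra z)) ^ n) y)) := rfl
    rw [e1, e2, ih (bra z x) y, killing_ad bra hjac z x _, killing_neg_right]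

set_option maxHeartbeats 1000000 in
lemma killing_expOp_adj (hjac : ∀ x y z : L, bra x (bra y z) = bra (bra x y) z + bra y (bra x z))
    (z x y : L) :
    killing bra (expOp (adC bra z) x) y = killing bra x (expOp (adC bra (-z)) y) := by
  set T := adC bra z with hT
  have hs : Summable fun n : ℕ => ((n.factorial : ℂ)⁻¹) • T ^ n :=
    NormedSpace.expSeries_summable' T
  have hs' : Summable fun n : ℕ => ((n.factorial : ℂ)⁻¹) • (-T) ^ n :=
    NormedSpace.expSeries_summable' (-T)
  have hev : ∀ (S : L →L[ℂ] L), (Summable fun n : ℕ => ((n.factorial : ℂ)⁻¹) • S ^ n) →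
      ∀ w : L, expOp S w = ∑' n : ℕ, ((n.factorial : ℂ)⁻¹) • (S ^ n) w := by
    intro S hS w
    have h := (ContinuousLinearMap.apply ℂ L w).map_tsum hS
    simpa [expOp] using h
  rw [hev T hs x, adC_neg, hev (-T) hs' y]
  have hsx := (ContinuousLinearMap.apply ℂ L x).summable hs
  simp only [ContinuousLinearMap.apply_apply, ContinuousLinearMap.smul_apply] at hsx
  have hsy := (ContinuousLinearMap.apply ℂ L y).summable hs'
  simp only [ContinuousLinearMap.apply_apply, ContinuousLinearMap.smul_apply] at hsy
  have hL := ContinuousLinearMap.map_tsum (LinearMap.toContinuousLinearMap (kL bra y)) hsx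
  simp only [LinearMap.coe_toContinuousLinearMap', kL, LinearMap.coe_mk, AddHom.coe_mk] at hL
  have hR := ContinuousLinearMap.map_tsum (LinearMap.toContinuousLinearMap (kR bra x)) hsy
  simp only [LinearMap.coe_toContinuousLinearMap', kR, LinearMap.coe_mk, AddHom.coe_mk] at hR
  rw [hL, hR]
  apply tsum_congr
  intro n
  rw [killing_smul_left, killing_smul_right, killing_pow_ad bra hjac z n x y]

set_option maxHeartbeats 1000000 in
lemma killing_expOp_invariant
    (hjac : ∀ x y z : L, bra x (bra y z) = bra (bra x y) z + bra y (bra x z))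
    (z x y : L) :
    killing bra (expOp (adC bra z) x) (expOp (adC bra z) y) = killing bra x y := by
  rw [killing_expOp_adj bra hjac z x (expOp (adC bra z) y)]
  congr 1
  rw [expOp_eq_exp, expOp_eq_exp, adC_neg]
  have h : NormedSpace.exp (-(adC bra z)) (NormedSpace.exp (adC bra z) y) =
      (NormedSpace.exp (-(adC bra z)) * NormedSpace.exp (adC bra z)) y := rfl
  letI : NormedAlgebra ℚ (L →L[ℂ] L) := NormedAlgebra.restrictScalars ℚ ℂ (L →L[ℂ] L)
  rw [h, ← NormedSpace.exp_add_of_commute (Commute.refl (adC bra z)).neg_left,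
    neg_add_cancel, NormedSpace.exp_zero]
  rfl

end aux

/-- For all Z, Υ in a finite-dimensional complex Lie algebra with Killing
form κ, κ(exp(ad_Z)(Υ), Υ) = κ(Υ, Υ) - 2·κ(Y, Y), where
Y = ½(exp(ad_{Z/2}) - exp(ad_{-Z/2}))(Υ). -/
theorem statement19 {L : Type*} [NormedAddCommGroup L] [NormedSpace ℂ L]
    [FiniteDimensional ℂ L]
    (bra : L →ₗ[ℂ] L →ₗ[ℂ] L)
    (halt : ∀ x : L, bra x x = 0)
    (hjac : ∀ x y z : L, bra x (bra y z) = bra (bra x y) z + bra y (bra x z))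
    (Z Υ Y : L)
    (hY : Y = (2 : ℂ)⁻¹ •
      (expOp (adC bra ((2 : ℂ)⁻¹ • Z)) Υ - expOp (adC bra (-((2 : ℂ)⁻¹ • Z))) Υ)) :
    killing bra (expOp (adC bra Z) Υ) Υ = killing bra Υ Υ - 2 * killing bra Y Y := by
  set z := (2 : ℂ)⁻¹ • Z with hz
  set A := expOp (adC bra z) Υ with hA
  set B := expOp (adC bra (-z)) Υ with hB
  have hZ2 : adC bra Z = adC bra z + adC bra z := by
    have hzz : z + z = Z := by rw [hz, ← add_smul]; norm_num
    ext x
    show bra Z x = bra z x + bra z x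
    rw [← hzz, map_add, LinearMap.add_apply]
  have hsplit : expOp (adC bra Z) Υ = expOp (adC bra z) A := by
    letI : NormedAlgebra ℚ (L →L[ℂ] L) := NormedAlgebra.restrictScalars ℚ ℂ (L →L[ℂ] L)
    rw [hA, expOp_eq_exp, expOp_eq_exp, hZ2,
      NormedSpace.exp_add_of_commute (Commute.refl (adC bra z))]
    rfl
  have h1 : killing bra (expOp (adC bra Z) Υ) Υ = killing bra A B := by
    rw [hsplit, killing_expOp_adj bra hjac z A Υ, ← hB]
  have h2 : killing bra A A = killing bra Υ Υ := killing_expOp_invariant bra hjac z Υ Υ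
  have h3 : killing bra B B = killing bra Υ Υ := killing_expOp_invariant bra hjac (-z) Υ Υ
  have hsym : killing bra A B = killing bra B A := killing_symm bra A B
  have hYY : killing bra Y Y =
      (2 : ℂ)⁻¹ * ((2 : ℂ)⁻¹ * (killing bra A A - killing bra A B
        - (killing bra B A - killing bra B B))) := by
    rw [hY, killing_smul_left, killing_smul_right,
      killing_sub_left, killing_sub_right, killing_sub_right]
  rw [h1, hYY, h2, h3, hsym]
  ring
end
end
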